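/- arXiv:math/0607097 — 3 statements merged into one kernel-verified Lean document; each statement's English description precedes it below -/
import Mathlib

section
/- Let E be a real inner product space, let η₁ > 0 and λ > 0, let u, v ∈ E, and let a ∈ ℝ satisfy η₁‖u‖² ≤ a². Set μ₁ = √(4η₁ + λ²) (so μ₁ > λ). Then ((μ₁ − λ)/(μ₁ + λ))·(a² + ‖v‖²) ≤ a² + ‖v + λ·u‖² ≤ ((μ₁ + λ)/(μ₁ − λ))·(a² + ‖v‖²). -/
/-- Lemma 3.3 (equivalence of the energy and pseudo energy functions), abstract form. -/
theorem pseudo_energy_equivalence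
    {E : Type*} [NormedAddCommGroup E] [InnerProductSpace ℝ E]
    (η₁ lam : ℝ) (hη : 0 < η₁) (hlam : 0 < lam)
    (u v : E) (a : ℝ) (ha : η₁ * ‖u‖ ^ 2 ≤ a ^ 2)
    (μ₁ : ℝ) (hμ : μ₁ = Real.sqrt (4 * η₁ + lam ^ 2)) :
    ((μ₁ - lam) / (μ₁ + lam)) * (a ^ 2 + ‖v‖ ^ 2) ≤ a ^ 2 + ‖v + lam • u‖ ^ 2 ∧
      a ^ 2 + ‖v + lam • u‖ ^ 2 ≤ ((μ₁ + lam) / (μ₁ - lam)) * (a ^ 2 + ‖v‖ ^ 2) := by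
  have hsum : (0:ℝ) < 4 * η₁ + lam ^ 2 := by positivity
  have hμsq : μ₁ ^ 2 = 4 * η₁ + lam ^ 2 := by
    rw [hμ, Real.sq_sqrt hsum.le]
  have hμgt : lam < μ₁ := by
    have : lam = Real.sqrt (lam ^ 2) := by
      rw [Real.sqrt_sq hlam.le]
    rw [hμ, this]
    exact Real.sqrt_lt_sqrt (by positivity) (by nlinarith)
  have hμp : 0 < μ₁ + lam := by linarith
  have hμm : 0 < μ₁ - lam := by linarith
  -- expand the norm
  have hexp : ‖v + lam • u‖ ^ 2
      = ‖v‖ ^ 2 + 2 * (lam * inner ℝ v u) + lam ^ 2 * ‖u‖ ^ 2 := by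
    rw [@norm_add_sq_real, real_inner_smul_right, norm_smul, Real.norm_eq_abs,
      abs_of_pos hlam, mul_pow]
  have hcs : |(inner ℝ v u : ℝ)| ≤ ‖v‖ * ‖u‖ := abs_real_inner_le_norm v u
  have hcs1 : -(‖v‖ * ‖u‖) ≤ (inner ℝ v u : ℝ) := neg_le_of_abs_le hcs
  have hcs2 : (inner ℝ v u : ℝ) ≤ ‖v‖ * ‖u‖ := le_of_abs_le hcs
  have hηeq : (μ₁ ^ 2 - lam ^ 2) / 4 = η₁ := by rw [hμsq]; ring
  have ha' : (μ₁ ^ 2 - lam ^ 2) / 4 * ‖u‖ ^ 2 ≤ a ^ 2 := by rw [hηeq]; exact ha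
  set t := ‖u‖
  set s := ‖v‖
  constructor
  · rw [div_mul_eq_mul_div, div_le_iff₀ hμp, hexp]
    nlinarith [mul_nonneg hlam.le (sq_nonneg ((μ₁ + lam) * t - 2 * s)),
      mul_le_mul_of_nonneg_left ha' (by positivity : (0:ℝ) ≤ 2 * lam),
      mul_le_mul_of_nonneg_left hcs1 (by positivity : (0:ℝ) ≤ 2 * lam * (μ₁ + lam))]
  · rw [div_mul_eq_mul_div, le_div_iff₀ hμm, hexp]
    nlinarith [mul_nonneg hlam.le (sq_nonneg ((μ₁ - lam) * t - 2 * s)),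
      mul_le_mul_of_nonneg_left ha' (by positivity : (0:ℝ) ≤ 2 * lam),
      mul_le_mul_of_nonneg_left hcs2 (by positivity : (0:ℝ) ≤ 2 * lam * (μ₁ - lam))]
end

section
/- Let E be a real inner product space, let α, λ, η₁ > 0 with λ ≤ min(α/2, η₁/(4α)), let u, w, f ∈ E, and let a ∈ ℝ satisfy η₁‖u‖² ≤ a². Then λ(2α − λ)⟨u, w⟩ − λa² − (2α − λ)‖w‖² + ⟨f, w⟩ ≤ −(λ/2)(a² + ‖w‖²) + (1/λ)‖f‖². -/
/-- Inequality (3.25): the key dissipativity estimate in the proof of Lemma 3.2,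
stated abstractly with `a` playing the role of `‖u‖₁` and `w` the role of `v + λu`. -/
theorem dissipativity_estimate
    {E : Type*} [NormedAddCommGroup E] [InnerProductSpace ℝ E]
    (α lam η₁ : ℝ) (hα : 0 < α) (hlam : 0 < lam) (hη : 0 < η₁)
    (hlam_le : lam ≤ min (α / 2) (η₁ / (4 * α)))
    (u w f : E) (a : ℝ) (ha : η₁ * ‖u‖ ^ 2 ≤ a ^ 2) :
    lam * (2 * α - lam) * (inner ℝ u w : ℝ) - lam * a ^ 2 - (2 * α - lam) * ‖w‖ ^ 2
        + (inner ℝ f w : ℝ)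
      ≤ -(lam / 2) * (a ^ 2 + ‖w‖ ^ 2) + (1 / lam) * ‖f‖ ^ 2 := by
  have h1 : lam ≤ α / 2 := le_trans hlam_le (min_le_left _ _)
  have h2 : lam ≤ η₁ / (4 * α) := le_trans hlam_le (min_le_right _ _)
  have h2' : lam * (4 * α) ≤ η₁ := (le_div_iff₀ (by positivity)).mp h2
  have hc : (0:ℝ) < 2 * α - lam := by linarith
  have huw : (inner ℝ u w : ℝ) ≤ ‖u‖ * ‖w‖ := real_inner_le_norm u w
  have hfw : (inner ℝ f w : ℝ) ≤ ‖f‖ * ‖w‖ := real_inner_le_norm f w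
  have hy1' : lam * (‖f‖ * ‖w‖) ≤ ‖f‖ ^ 2 + (lam / 4) * (lam * ‖w‖ ^ 2) := by
    nlinarith [sq_nonneg (‖f‖ - (lam / 2) * ‖w‖)]
  have hy1 : ‖f‖ * ‖w‖ ≤ (1 / lam) * ‖f‖ ^ 2 + (lam / 4) * ‖w‖ ^ 2 := by
    calc ‖f‖ * ‖w‖ = (1 / lam) * (lam * (‖f‖ * ‖w‖)) := by field_simp
    _ ≤ (1 / lam) * (‖f‖ ^ 2 + (lam / 4) * (lam * ‖w‖ ^ 2)) :=
        mul_le_mul_of_nonneg_left hy1' (by positivity)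
    _ = (1 / lam) * ‖f‖ ^ 2 + (lam / 4) * ‖w‖ ^ 2 := by field_simp
  have h3 : lam * (2 * α - lam) ^ 2 ≤ η₁ * α := by nlinarith [sq_nonneg lam, hlam.le]
  have hy2' : 2 * α * (lam * (2 * α - lam) * (‖u‖ * ‖w‖))
      ≤ 2 * α * ((lam / 2) * (η₁ * ‖u‖ ^ 2) + (α / 2) * ‖w‖ ^ 2) := by
    nlinarith [sq_nonneg (lam * (2 * α - lam) * ‖u‖ - α * ‖w‖),
      mul_le_mul_of_nonneg_right (mul_le_mul_of_nonneg_left h3 hlam.le) (sq_nonneg ‖u‖)]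
  have hy2 : lam * (2 * α - lam) * (‖u‖ * ‖w‖)
      ≤ (lam / 2) * (η₁ * ‖u‖ ^ 2) + (α / 2) * ‖w‖ ^ 2 :=
    le_of_mul_le_mul_left (by linarith) (by positivity : (0:ℝ) < 2 * α)
  have hnn : 0 ≤ lam * (2 * α - lam) := by positivity
  have h4 := mul_le_mul_of_nonneg_left huw hnn
  nlinarith [mul_le_mul_of_nonneg_left ha (by linarith : (0:ℝ) ≤ lam / 2), sq_nonneg ‖w‖]
end

section
/- Let E be a real inner product space and let B : E → E be a continuous linear map that is symmetric (⟨Bx, y⟩ = ⟨x, By⟩ for all x, y) and satisfies η₁‖x‖² ≤ ‖Bx‖² for all x ∈ E, where η₁ > 0. Let α > 0 and let 0 < λ ≤ min(α/2, η₁/(4α)). Let f : ℝ → E be continuous and let u, v : ℝ → E be such that for every t ≥ 0, u has derivative v(t) at t and v has derivative −B(B(u(t))) − 2α·v(t) + f(t) at t. Define e^λ(t) = ‖B(u(t))‖² + ‖v(t) + λ·u(t)‖². Then for all t ≥ 0, e^λ(t) ≤ e^λ(0) e^{−λt} + (2/λ) ∫₀ᵗ e^{−λ(t−s)} ‖f(s)‖²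 ds. -/
open MeasureTheory intervalIntegral

lemma scalar_key (η₁ α lam x y un Fn p q : ℝ)
    (hη : 0 < η₁) (hα : 0 < α) (hlam0 : 0 < lam) (hlam1 : lam ≤ α/2) (hlam2 : lam * (4*α) ≤ η₁)
    (hU : η₁ * un^2 ≤ x^2) (hp : p ≤ un * y) (hq : q ≤ Fn * y) :
    (-2*lam*x^2 + 2*(lam-2*α)*y^2 - 2*lam*(lam-2*α)*p + 2*q) + lam*(x^2+y^2) ≤ (2/lam)*Fn^2 := by
  have hk : 0 ≤ lam*(2*α - lam) := by nlinarith
  have hA : 2*q ≤ (2/lam)*Fn^2 + (lam/2)*y^2 := by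
    have h : (2/lam)*Fn^2 + (lam/2)*y^2 - 2*(Fn*y) = (2*Fn - lam*y)^2/(2*lam) := by
      field_simp; ring
    have h0 : 0 ≤ (2*Fn - lam*y)^2/(2*lam) := by positivity
    linarith
  have hC : 2*(un*y) ≤ (η₁/(2*α))*un^2 + ((2*α)/η₁)*y^2 := by
    have h : (η₁/(2*α))*un^2 + ((2*α)/η₁)*y^2 - 2*(un*y) = (η₁*un - 2*α*y)^2/(2*α*η₁) := by
      field_simp; ring
    have h0 : 0 ≤ (η₁*un - 2*α*y)^2/(2*α*η₁) := by positivity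
    linarith
  have hcross : -(2*lam*(lam-2*α)*p) ≤ lam*(2*α-lam)*((η₁/(2*α))*un^2 + ((2*α)/η₁)*y^2) := by
    have e : -(2*lam*(lam-2*α)*p) = lam*(2*α-lam)*(2*p) := by ring
    rw [e]
    refine mul_le_mul_of_nonneg_left ?_ hk
    calc 2*p ≤ 2*(un*y) := by linarith
    _ ≤ (η₁/(2*α))*un^2 + ((2*α)/η₁)*y^2 := hC
  have hterm1 : lam*(2*α-lam)*((η₁/(2*α))*un^2) ≤ lam * x^2 := by
    have h1 : lam*(2*α-lam)*((η₁/(2*α))*un^2) ≤ lam*(2*α)*((η₁/(2*α))*un^2) := by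
      refine mul_le_mul_of_nonneg_right ?_ (by positivity)
      nlinarith
    have h2 : lam*(2*α)*((η₁/(2*α))*un^2) = lam*(η₁*un^2) := by
      field_simp
    have h3 : lam*(η₁*un^2) ≤ lam*x^2 := mul_le_mul_of_nonneg_left hU hlam0.le
    linarith
  have hterm2 : lam*(2*α-lam)*(((2*α)/η₁)*y^2) ≤ α*y^2 := by
    have h1 : lam*(2*α-lam)*(((2*α)/η₁)*y^2) ≤ lam*(2*α)*(((2*α)/η₁)*y^2) := by
      refine mul_le_mul_of_nonneg_right ?_ (by positivity)
      nlinarith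
    have h2 : lam*(2*α)*(((2*α)/η₁)*y^2) = (4*α^2*lam/η₁)*y^2 := by ring
    have h3 : 4*α^2*lam/η₁ ≤ α := by
      rw [div_le_iff₀ hη]; nlinarith
    have h4 : (4*α^2*lam/η₁)*y^2 ≤ α*y^2 := mul_le_mul_of_nonneg_right h3 (sq_nonneg y)
    linarith
  have hy2 : (7/2*lam - 3*α)*y^2 ≤ 0 :=
    mul_nonpos_of_nonpos_of_nonneg (by linarith) (sq_nonneg y)
  nlinarith [hA, hcross, hterm1, hterm2, hy2]

lemma d_eq {E : Type*} [NormedAddCommGroup E] [InnerProductSpace ℝ E] (B : E →L[ℝ] E)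
    (hB : ∀ x y : E, (inner ℝ (B x) y : ℝ) = inner ℝ x (B y)) (α lam : ℝ) (U V F : E) :
    ((inner ℝ (B U) (B V) : ℝ) + inner ℝ (B V) (B U))
      + ((inner ℝ (V + lam • U) ((-(B (B U)) - (2*α) • V + F) + lam • V) : ℝ)
        + inner ℝ ((-(B (B U)) - (2*α) • V + F) + lam • V) (V + lam • U))
    = -2*lam*‖B U‖^2 + 2*(lam-2*α)*‖V + lam • U‖^2
      - 2*lam*(lam-2*α)*(inner ℝ U (V + lam • U) : ℝ)
      + 2*(inner ℝ F (V + lam • U) : ℝ) := by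
  simp only [← real_inner_self_eq_norm_sq, inner_add_left, inner_add_right, inner_sub_left,
    inner_sub_right, inner_neg_left, inner_neg_right, real_inner_smul_left, real_inner_smul_right]
  linear_combination (real_inner_comm (B U) (B V)) + 2*(hB V (B U)) - 2*lam*(hB U (B U))
    + (real_inner_comm V (B (B U))) - lam*(real_inner_comm U (B (B U)))
    + (2*lam-2*α)*(real_inner_comm V V) + (2*lam^2 - 2*α*lam)*(real_inner_comm V U)
    + (real_inner_comm F V) + lam*(real_inner_comm F U)
    - 2*(hB (B U) V) - 2*(hB V (B U)) + 4*lam*(hB U (B U)) + lam^2*(real_inner_comm U V)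

/-- The deterministic (noise-free) version of Lemma 3.2 (exponential estimate) for the
pseudo energy function `e^λ(u;v) = ‖Bu‖² + ‖v + λu‖²`. -/
theorem pseudo_energy_exponential_estimate
    {E : Type*} [NormedAddCommGroup E] [InnerProductSpace ℝ E]
    (B : E →L[ℝ] E) (hB : ∀ x y : E, (inner ℝ (B x) y : ℝ) = inner ℝ x (B y))
    (η₁ : ℝ) (hη : 0 < η₁) (hBlow : ∀ x : E, η₁ * ‖x‖ ^ 2 ≤ ‖B x‖ ^ 2)
    (α lam : ℝ) (hα : 0 < α) (hlam0 : 0 < lam)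
    (hlam : lam ≤ min (α / 2) (η₁ / (4 * α)))
    (f : ℝ → E) (hf : Continuous f) (u v : ℝ → E)
    (hu : ∀ t : ℝ, 0 ≤ t → HasDerivAt u (v t) t)
    (hv : ∀ t : ℝ, 0 ≤ t → HasDerivAt v (-(B (B (u t))) - (2 * α) • v t + f t) t)
    (elam : ℝ → ℝ) (helam : elam = fun t => ‖B (u t)‖ ^ 2 + ‖v t + lam • u t‖ ^ 2) :
    ∀ t : ℝ, 0 ≤ t →
      elam t ≤ elam 0 * Real.exp (-lam * t)
        + (2 / lam) * ∫ s in (0 : ℝ)..t, Real.exp (-lam * (t - s)) * ‖f s‖ ^ 2 := by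
  intro t ht
  have hlam1 : lam ≤ α / 2 := le_trans hlam (min_le_left _ _)
  have hlam2 : lam * (4 * α) ≤ η₁ := by
    have h := le_trans hlam (min_le_right _ _)
    rw [le_div_iff₀ (by positivity)] at h
    linarith
  have helam' : ∀ s : ℝ, elam s = ‖B (u s)‖ ^ 2 + ‖v s + lam • u s‖ ^ 2 := fun s => by
    rw [helam]
  -- the derivative of the pseudo energy
  set d : ℝ → ℝ := fun s =>
    ((inner ℝ (B (u s)) (B (v s)) : ℝ) + inner ℝ (B (v s)) (B (u s)))
      + ((inner ℝ (v s + lam • u s) ((-(B (B (u s))) - (2*α) • v s + f s) + lam • v s) : ℝ)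
        + inner ℝ ((-(B (B (u s))) - (2*α) • v s + f s) + lam • v s) (v s + lam • u s)) with hd
  have hder : ∀ s : ℝ, 0 ≤ s → HasDerivAt elam (d s) s := by
    intro s hs
    have h1 : HasDerivAt (fun r => B (u r)) (B (v s)) s :=
      B.hasFDerivAt.comp_hasDerivAt s (hu s hs)
    have h2 : HasDerivAt (fun r => v r + lam • u r)
        ((-(B (B (u s))) - (2*α) • v s + f s) + lam • v s) s :=
      (hv s hs).add ((hu s hs).const_smul lam)
    have h3 := (HasDerivAt.inner ℝ h1 h1).add (HasDerivAt.inner ℝ h2 h2)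
    have he : elam = fun r => (inner ℝ (B (u r)) (B (u r)) : ℝ)
        + (inner ℝ (v r + lam • u r) (v r + lam • u r) : ℝ) := by
      funext r
      rw [helam' r, real_inner_self_eq_norm_sq, real_inner_self_eq_norm_sq]
    rw [he, hd]
    exact h3
  -- the key differential inequality
  have key : ∀ s : ℝ, 0 ≤ s → d s + lam * elam s ≤ (2/lam) * ‖f s‖^2 := by
    intro s hs
    rw [hd]
    simp only []
    rw [d_eq B hB α lam (u s) (v s) (f s), helam' s]
    exact scalar_key η₁ α lam (‖B (u s)‖) (‖v s + lam • u s‖) (‖u s‖) (‖f s‖)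
      (inner ℝ (u s) (v s + lam • u s)) (inner ℝ (f s) (v s + lam • u s))
      hη hα hlam0 hlam1 hlam2 (hBlow (u s))
      (real_inner_le_norm _ _) (real_inner_le_norm _ _)
  -- the integral of the forcing term
  have hcont_int : Continuous (fun r : ℝ => Real.exp (lam*r) * ‖f r‖^2) := by
    have : Continuous fun r : ℝ => ‖f r‖ := hf.norm
    continuity
  set Fi : ℝ → ℝ := fun s => ∫ r in (0:ℝ)..s, Real.exp (lam*r) * ‖f r‖^2 with hFi
  have hF : ∀ s : ℝ, HasDerivAt Fi (Real.exp (lam*s) * ‖f s‖^2) s := fun s =>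
    intervalIntegral.integral_hasDerivAt_right (hcont_int.intervalIntegrable _ _)
      (hcont_int.stronglyMeasurableAtFilter _ _) hcont_int.continuousAt
  set g : ℝ → ℝ := fun s => Real.exp (lam*s) * elam s - (2/lam) * Fi s with hg
  have hgder : ∀ s : ℝ, 0 ≤ s → HasDerivAt g
      (lam * Real.exp (lam*s) * elam s + Real.exp (lam*s) * d s
        - (2/lam) * (Real.exp (lam*s) * ‖f s‖^2)) s := by
    intro s hs
    have he : HasDerivAt (fun r : ℝ => Real.exp (lam*r)) (lam * Real.exp (lam*s)) s := by
      simpa [mul_comm] using ((hasDerivAt_id s).const_mul lam).exp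
    have := (he.mul (hder s hs)).sub ((hF s).const_mul (2/lam))
    exact this
  have hanti : AntitoneOn g (Set.Icc 0 t) := by
    apply antitoneOn_of_deriv_nonpos (convex_Icc 0 t)
    · intro s hs
      exact ((hgder s hs.1).continuousAt).continuousWithinAt
    · rw [interior_Icc]
      intro s hs
      exact (hgder s hs.1.le).differentiableAt.differentiableWithinAt
    · rw [interior_Icc]
      intro s hs
      rw [(hgder s hs.1.le).deriv]
      have hk := key s hs.1.le
      have e : lam * Real.exp (lam*s) * elam s + Real.exp (lam*s) * d s
          - (2/lam) * (Real.exp (lam*s) * ‖f s‖^2)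
          = Real.exp (lam*s) * ((d s + lam * elam s) - (2/lam) * ‖f s‖^2) := by ring
      rw [e]
      exact mul_nonpos_iff.2 (Or.inl ⟨Real.exp_nonneg _, by linarith⟩)
  have hineq : g t ≤ g 0 := hanti (Set.left_mem_Icc.2 ht) (Set.right_mem_Icc.2 ht) ht
  have hg0 : g 0 = elam 0 := by
    simp [hg, hFi, intervalIntegral.integral_same]
  rw [hg0, hg] at hineq
  dsimp only at hineq
  have hE : Real.exp (-lam*t) * Real.exp (lam*t) = 1 := by
    rw [← Real.exp_add]; norm_num
  have hIeq : (∫ s in (0:ℝ)..t, Real.exp (-lam*(t-s)) * ‖f s‖^2)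
      = Real.exp (-lam*t) * Fi t := by
    rw [hFi, ← intervalIntegral.integral_const_mul]
    apply intervalIntegral.integral_congr
    intro s hs
    dsimp only
    rw [← mul_assoc, ← Real.exp_add]
    congr 2
    ring
  rw [hIeq]
  calc elam t = (Real.exp (-lam*t) * Real.exp (lam*t)) * elam t := by rw [hE, one_mul]
  _ = Real.exp (-lam*t) * (Real.exp (lam*t) * elam t - (2/lam) * Fi t)
      + (2/lam) * (Real.exp (-lam*t) * Fi t) := by ring
  _ ≤ Real.exp (-lam*t) * elam 0 + (2/lam) * (Real.exp (-lam*t) * Fi t) := by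
      have := mul_le_mul_of_nonneg_left hineq (Real.exp_nonneg (-lam*t))
      linarith
  _ = elam 0 * Real.exp (-lam*t) + (2/lam) * (Real.exp (-lam*t) * Fi t) := by ring
end
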